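/- Let f be a polynomial with real coefficients of degree q ≥ 1 and I = (a,b) a nonempty open interval such that for every μ ∈ I the equation f(λ) = μ has q real solutions counted with multiplicity (i.e. all complex roots of f - μ are real). Then f'(λ) ≠ 0 for every real λ such that f(λ) ∈ I. -/

import Mathlib

open Polynomial

-- algebraic identity for the "discriminant-like" quantity D(p) = p'(l)^2 - p(l) p''(l)
lemma Dval_cons (q : Polynomial ℝ) (r l : ℝ) :
    (((X - C r) * q).derivative.eval l) ^ 2
      - ((X - C r) * q).eval l * (((X - C r) * q).derivative.derivative.eval l)
    = (q.eval l) ^ 2 + (l - r) ^ 2 *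
      ((q.derivative.eval l) ^ 2 - q.eval l * (q.derivative.derivative.eval l)) := by
  simp only [derivative_mul, derivative_sub, derivative_add, derivative_X, derivative_C,
    eval_add, eval_mul, eval_sub, eval_X, eval_C, sub_zero, one_mul, eval_one, zero_mul,
    zero_sub, zero_add, eval_neg, mul_one]
  ring

lemma key_nonneg (l : ℝ) (R : Multiset ℝ) (hR : ∀ r ∈ R, r ≠ l) (c : ℝ) (hc : c ≠ 0) :
    (C c * (R.map fun r => X - C r).prod).eval l ≠ 0 ∧
    0 ≤ ((C c * (R.map fun r => X - C r).prod).derivative.eval l) ^ 2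
        - (C c * (R.map fun r => X - C r).prod).eval l *
          ((C c * (R.map fun r => X - C r).prod).derivative.derivative.eval l) ∧
    (R ≠ 0 → 0 < ((C c * (R.map fun r => X - C r).prod).derivative.eval l) ^ 2
        - (C c * (R.map fun r => X - C r).prod).eval l *
          ((C c * (R.map fun r => X - C r).prod).derivative.derivative.eval l)) := by
  induction R using Multiset.induction_on with
  | empty => simp [hc]
  | cons r R ih =>
      have hR' : ∀ s ∈ R, s ≠ l := fun s hs => hR s (Multiset.mem_cons_of_mem hs)
      have hr : r ≠ l := hR r (Multiset.mem_cons_self r R)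
      obtain ⟨h1, h2, _⟩ := ih hR'
      have hrw : C c * ((r ::ₘ R).map fun r => X - C r).prod
          = (X - C r) * (C c * (R.map fun r => X - C r).prod) := by
        rw [Multiset.map_cons, Multiset.prod_cons]; ring
      rw [hrw]
      set p := C c * (R.map fun r => X - C r).prod with hp
      have heval : ((X - C r) * p).eval l = (l - r) * p.eval l := by simp
      have htr : l - r ≠ 0 := sub_ne_zero.mpr (Ne.symm hr)
      have hD := Dval_cons p r l
      constructor
      · rw [heval]; exact mul_ne_zero htr h1
      · constructor
        · rw [hD]; positivity
        · intro _
          rw [hD]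
          have : (0:ℝ) < (p.eval l) ^ 2 := by positivity
          nlinarith [sq_nonneg (l - r)]

lemma factor (f : Polynomial ℝ) (q : ℕ) (hq : 1 ≤ q) (hdeg : f.natDegree = q) (μ : ℝ)
    (h : ∀ z : ℂ, Polynomial.aeval z f = (μ : ℂ) → z.im = 0) :
    ∃ R : Multiset ℝ, Multiset.card R = q ∧
      f - C μ = C (f - C μ).leadingCoeff * (R.map fun r => X - C r).prod := by
  set p := f - C μ with hpdef
  have hpdeg : p.natDegree = q := by rw [hpdef, natDegree_sub_C, hdeg]
  have hp0 : p ≠ 0 := by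
    intro h0
    rw [h0, natDegree_zero] at hpdeg
    omega
  set φ := algebraMap ℝ ℂ with hφ
  have hsplits : Splits (p.map φ) := IsAlgClosed.splits _
  have hfact : p.map φ = C (φ p.leadingCoeff) * ((p.map φ).roots.map fun a => X - C a).prod := by
    have := hsplits.eq_prod_roots; rwa [leadingCoeff_map] at this
  set Rc := (p.map φ).roots with hRc
  have hcard : Multiset.card Rc = q := by
    rw [hRc, ← hsplits.natDegree_eq_card_roots, natDegree_map, hpdeg]
  have hroots_real : ∀ z ∈ Rc, z = ((z.re : ℝ) : ℂ) := by
    intro z hz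
    have hz' : (p.map φ).eval z = 0 := isRoot_of_mem_roots hz
    have haev : Polynomial.aeval z f = (μ : ℂ) := by
      have : Polynomial.aeval z p = 0 := by rwa [aeval_def, ← eval_map]
      rw [hpdef] at this
      simp only [map_sub, aeval_C] at this
      have : Polynomial.aeval z f = φ μ := by linear_combination this
      exact this
    have him := h z haev
    exact Complex.ext (by simp) (by simp [him])
  refine ⟨Rc.map Complex.re, by simp [hcard], ?_⟩
  apply Polynomial.map_injective φ (algebraMap ℝ ℂ).injective
  rw [hfact]
  rw [Polynomial.map_mul, map_C, Polynomial.map_multiset_prod, Multiset.map_map,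
    Multiset.map_map]
  congr 1
  congr 1
  apply Multiset.map_congr rfl
  intro z hz
  have hz2 : ((z.re : ℝ) : ℂ) = z := (hroots_real z hz).symm
  simp only [Function.comp_apply, Polynomial.map_sub, map_X, map_C]
  rw [show φ z.re = ((z.re : ℝ) : ℂ) from rfl, hz2]

theorem stmt_17 (f : Polynomial ℝ) (q : ℕ) (hq : 1 ≤ q) (hdeg : f.natDegree = q)
    (a b : ℝ) (hab : a < b)
    (hreal : ∀ μ ∈ Set.Ioo a b, ∀ z : ℂ, Polynomial.aeval z f = (μ : ℂ) → z.im = 0) :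
    ∀ l : ℝ, f.eval l ∈ Set.Ioo a b → f.derivative.eval l ≠ 0 := by
  intro l hl hder
  set μ₀ := f.eval l with hμ₀
  have key : ∀ μ ∈ Set.Ioo a b, μ ≠ μ₀ →
      (μ₀ - μ) * (f.derivative.derivative.eval l) < 0 := by
    intro μ hμ hne
    obtain ⟨R, hcard, hfac⟩ := factor f q hq hdeg μ (fun z hz => hreal μ hμ z hz)
    have hp0 : f - C μ ≠ 0 := by
      intro h0
      have : (f - C μ).natDegree = q := by rw [natDegree_sub_C, hdeg]
      rw [h0, natDegree_zero] at this
      omega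
    have hc : (f - C μ).leadingCoeff ≠ 0 := leadingCoeff_ne_zero.mpr hp0
    have hRl : ∀ r ∈ R, r ≠ l := by
      intro r hr hrl
      have hev : (f - C μ).eval l = 0 := by
        rw [hfac, eval_mul, eval_C, eval_multiset_prod]
        have : (0:ℝ) ∈ (R.map fun r => X - C r).map (fun p => p.eval l) := by
          rw [Multiset.map_map]
          refine Multiset.mem_map.mpr ⟨r, hr, ?_⟩
          simp [hrl]
        rw [Multiset.prod_eq_zero this, mul_zero]
      have : μ₀ - μ = 0 := by simpa using hev
      exact hne (by linarith [sub_eq_zero.mp this])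
    obtain ⟨_, _, hpos⟩ := key_nonneg l R hRl _ hc
    have hRne : R ≠ 0 := by
      intro h0
      rw [h0] at hcard
      simp at hcard
      omega
    have hpos' := hpos hRne
    rw [← hfac] at hpos'
    have hd1 : (f - C μ).derivative = f.derivative := by
      rw [derivative_sub, derivative_C, sub_zero]
    rw [hd1] at hpos'
    have hev : (f - C μ).eval l = μ₀ - μ := by simp [hμ₀]
    rw [hev, hder] at hpos'
    nlinarith
  have h1 : ((a + μ₀)/2) ∈ Set.Ioo a b := ⟨by cases hl with | intro h _ => linarith,
    by cases hl with | intro h1 h2 => linarith⟩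
  have h2 : ((μ₀ + b)/2) ∈ Set.Ioo a b := ⟨by cases hl with | intro h1 h2 => linarith,
    by cases hl with | intro h1 h2 => linarith⟩
  have k1 := key _ h1 (by cases hl with | intro h _ => intro hc; rw [← hc] at *; linarith)
  have k2 := key _ h2 (by cases hl with | intro _ h => intro hc; rw [← hc] at *; linarith)
  cases hl with | intro ha hb =>
  nlinarith
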